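/- Let F = x + F₂ + F₃ + F₄ and G = z + G₂ + ⋯ + G₆ with Fᵢ, Gᵢ ∈ ℂ[x,y,z] homogeneous of degree i. Suppose F₄ = h⁴, G₆ = αh⁶, F₂ = h·F̄₁, F₃ = b·h³, G₅ = ((3/2)αb + β)h⁵, G₄ = E·h⁴ + (3/2)α·h³·F̄₁, G₃ = K·h³ + L·h²·F̄₁ + (3/2)α·h²·x, and G₂ = A·h·x + B·h² + C·F̄₁² + D·h·F̄₁, where h ≠ 0 and F̄₁ are homogeneous of degree 1, α ∈ ℂ with α ≠ 0, β, a, b, c, d ∈ ℂ, and A = (5/4)β + (3/4)αb, B = −(5/128)βb³ + (3/16)cb + (3/128)αb⁴ + (1/4)d, C = (3/8)α, D = (1/4)a + (5/16)βb − (3/16)αb², E = (3/8)αb² + (5/4)βb + (1/4)a, K = (5/32)βb² + (1/4)ab − (1/16)αb³ + (1/4)c, L = (5/4)β + (3/4)αb. If deg[F,G] < 5, then either (1) there exist R, S, M, N, K̃, L̃, B̃, D̃ ∈ ℂ such that the polynomial identities x = R·F̄₁ + S·h and z = M·F̄₁ + N·h hold in ℂ[x,y,z], G₃ = K̃·h³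 + L̃·h²·F̄₁, and G₂ = B̃·h² + C·F̄₁² + D̃·h·F̄₁; or (2) there exist f, e ∈ ℂ such that F̄₁ = f·h, F₂ = f·h², G₄ = (E + (3/2)αf)·h⁴, G₃ = (K + Lf)·h³ + (3/2)α·h²·x, G₂ = A·h·x + (B + Cf² + Df)·h², and, with M = ((3/4)K − (3/4)bD)f + (1/4)e + (1/4)(3bC − (1/2)L)f², one has M ≠ 0 and the identity M·h = z − (E − (3/4)bA + (3/4)αf)·x in ℂ[x,y,z]. -/

import Mathlib

open MvPolynomial

noncomputable def jacMinor (f g : MvPolynomial (Fin 3) ℂ) (i j : Fin 3) :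
    MvPolynomial (Fin 3) ℂ :=
  pderiv i f * pderiv j g - pderiv j f * pderiv i g

lemma deg3 (d : Fin 3 →₀ ℕ) : d.degree = d 0 + d 1 + d 2 := by
  rw [Finsupp.degree_apply, Finset.sum_subset (Finset.subset_univ d.support)
    (fun i _ hi => Finsupp.notMem_support_iff.mp hi)]
  exact Fin.sum_univ_three d

lemma lin_rep (p : MvPolynomial (Fin 3) ℂ) (hp : p.IsHomogeneous 1) :
    ∃ a0 a1 a2 : ℂ, p = C a0 * X 0 + C a1 * X 1 + C a2 * X 2 := by
  refine ⟨coeff (Finsupp.single 0 1) p, coeff (Finsupp.single 1 1) p,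
    coeff (Finsupp.single 2 1) p, ?_⟩
  apply MvPolynomial.ext
  intro d
  have hsd : ∀ k : Fin 3, (Finsupp.single k 1 : Fin 3 →₀ ℕ).degree = 1 := by
    intro k; rw [deg3]; fin_cases k <;> simp
  simp only [coeff_add, coeff_C_mul, coeff_X']
  by_cases hd : d.degree = 1
  · rw [deg3] at hd
    have h3 : (d 0 = 1 ∧ d 1 = 0 ∧ d 2 = 0) ∨ (d 0 = 0 ∧ d 1 = 1 ∧ d 2 = 0) ∨
        (d 0 = 0 ∧ d 1 = 0 ∧ d 2 = 1) := by omega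
    rcases h3 with ⟨e0,e1,e2⟩|⟨e0,e1,e2⟩|⟨e0,e1,e2⟩
    · have hde : d = Finsupp.single (0 : Fin 3) 1 := by
        ext a; fin_cases a <;> simp_all [Finsupp.single_apply]
      subst hde; norm_num [Finsupp.single_eq_single_iff, Fin.ext_iff]
    · have hde : d = Finsupp.single (1 : Fin 3) 1 := by
        ext a; fin_cases a <;> simp_all [Finsupp.single_apply]
      subst hde; norm_num [Finsupp.single_eq_single_iff, Fin.ext_iff]
    · have hde : d = Finsupp.single (2 : Fin 3) 1 := by
        ext a; fin_cases a <;> simp_all [Finsupp.single_apply]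
      subst hde; norm_num [Finsupp.single_eq_single_iff, Fin.ext_iff]
  · have h0 : coeff d p = 0 := hp.coeff_eq_zero (by rwa [Ne])
    rw [h0]
    have hne : ∀ k : Fin 3, ¬ ((Finsupp.single k 1 : Fin 3 →₀ ℕ) = d) := by
      intro k hk; exact hd (hk ▸ hsd k)
    simp [hne]

lemma pderiv_homog {p : MvPolynomial (Fin 3) ℂ} {n : ℕ}
    (hp : p.IsHomogeneous (n + 1)) (i : Fin 3) : (pderiv i p).IsHomogeneous n := by
  nth_rewrite 1 [p.as_sum]
  rw [map_sum]
  apply IsHomogeneous.sum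
  intro d hd
  rw [pderiv_monomial]
  by_cases hdi : d i = 0
  · rw [hdi]; norm_num
    exact isHomogeneous_zero _ _ _
  · apply isHomogeneous_monomial
    have hdeg : d.degree = n + 1 := by
      rw [Finsupp.degree_eq_weight_one]
      exact hp (mem_support_iff.mp hd)
    rw [deg3] at hdeg ⊢
    simp only [Finsupp.tsub_apply]
    fin_cases i <;> simp_all [Finsupp.single_apply] <;> omega

lemma jac_homog {p q : MvPolynomial (Fin 3) ℂ} {m n : ℕ}
    (hp : p.IsHomogeneous (m + 1)) (hq : q.IsHomogeneous (n + 1)) (i j : Fin 3) :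
    (jacMinor p q i j).IsHomogeneous (m + n) :=
  ((pderiv_homog hp i).mul (pderiv_homog hq j)).sub
    ((pderiv_homog hp j).mul (pderiv_homog hq i))

lemma prop3 (h0 h1 h2 v0 v1 v2 : ℂ) (hne : h0 ≠ 0 ∨ h1 ≠ 0 ∨ h2 ≠ 0)
    (e01 : h0*v1 - h1*v0 = 0) (e02 : h0*v2 - h2*v0 = 0) (e12 : h1*v2 - h2*v1 = 0) :
    ∃ s : ℂ, v0 = s*h0 ∧ v1 = s*h1 ∧ v2 = s*h2 := by
  rcases hne with H | H | H
  · refine ⟨v0/h0, by field_simp, ?_, ?_⟩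
    · field_simp; linear_combination e01
    · field_simp; linear_combination e02
  · refine ⟨v1/h1, ?_, by field_simp, ?_⟩
    · field_simp; linear_combination -e01
    · field_simp; linear_combination e12
  · refine ⟨v2/h2, ?_, ?_, by field_simp⟩
    · field_simp; linear_combination -e02
    · field_simp; linear_combination -e12

lemma dep0 (u v h0 h1 h2 q0 q1 q2 : ℂ)
    (e0 : u*h0 + v*q0 = 0) (e1 : u*h1 + v*q1 = 0) (e2 : u*h2 + v*q2 = 0)
    (hm : ¬(h0*q1 - h1*q0 = 0 ∧ h0*q2 - h2*q0 = 0 ∧ h1*q2 - h2*q1 = 0)) : u = 0 := by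
  have k01 : u*(h0*q1 - h1*q0) = 0 := by linear_combination q1*e0 - q0*e1
  have k02 : u*(h0*q2 - h2*q0) = 0 := by linear_combination q2*e0 - q0*e2
  have k12 : u*(h1*q2 - h2*q1) = 0 := by linear_combination q2*e1 - q1*e2
  by_contra hu
  exact hm ⟨(mul_eq_zero.mp k01).resolve_left hu, (mul_eq_zero.mp k02).resolve_left hu,
    (mul_eq_zero.mp k12).resolve_left hu⟩

set_option maxHeartbeats 4000000 in
theorem stmt15 (F2 F3 F4 G2 G3 G4 G5 G6 h F1bar : MvPolynomial (Fin 3) ℂ)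
    (α β a b c d A B CC D E K L : ℂ)
    (hF2 : F2.IsHomogeneous 2) (hF3 : F3.IsHomogeneous 3) (hF4 : F4.IsHomogeneous 4)
    (hG2 : G2.IsHomogeneous 2) (hG3 : G3.IsHomogeneous 3) (hG4 : G4.IsHomogeneous 4)
    (hG5 : G5.IsHomogeneous 5) (hG6 : G6.IsHomogeneous 6)
    (hh : h ≠ 0) (hhhom : h.IsHomogeneous 1) (hF1bar : F1bar.IsHomogeneous 1) (hα : α ≠ 0)
    (hA : A = (5 / 4) * β + (3 / 4) * α * b)
    (hB : B = -(5 / 128) * β * b ^ 3 + (3 / 16) * c * b + (3 / 128) * α * b ^ 4 + (1 / 4) * d)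
    (hC : CC = (3 / 8) * α)
    (hD : D = (1 / 4) * a + (5 / 16) * β * b - (3 / 16) * α * b ^ 2)
    (hE : E = (3 / 8) * α * b ^ 2 + (5 / 4) * β * b + (1 / 4) * a)
    (hK : K = (5 / 32) * β * b ^ 2 + (1 / 4) * a * b - (1 / 16) * α * b ^ 3 + (1 / 4) * c)
    (hL : L = (5 / 4) * β + (3 / 4) * α * b)
    (hF4eq : F4 = h ^ 4) (hG6eq : G6 = C α * h ^ 6)
    (hF2eq : F2 = h * F1bar) (hF3eq : F3 = C b * h ^ 3)
    (hG5eq : G5 = C ((3 / 2) * α * b + β) * h ^ 5)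
    (hG4eq : G4 = C E * h ^ 4 + C ((3 / 2) * α) * h ^ 3 * F1bar)
    (hG3eq : G3 = C K * h ^ 3 + C L * h ^ 2 * F1bar + C ((3 / 2) * α) * h ^ 2 * X 0)
    (hG2eq : G2 = C A * h * X 0 + C B * h ^ 2 + C CC * F1bar ^ 2 + C D * h * F1bar)
    (hbr : ∀ i j : Fin 3, (jacMinor (X 0 + F2 + F3 + F4) (X 2 + G2 + G3 + G4 + G5 + G6) i j).totalDegree < 3) :
    (∃ R S M N Kt Lt Bt Dt : ℂ,
      (X 0 : MvPolynomial (Fin 3) ℂ) = C R * F1bar + C S * h ∧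
      (X 2 : MvPolynomial (Fin 3) ℂ) = C M * F1bar + C N * h ∧
      G3 = C Kt * h ^ 3 + C Lt * h ^ 2 * F1bar ∧
      G2 = C Bt * h ^ 2 + C CC * F1bar ^ 2 + C Dt * h * F1bar) ∨
    (∃ f e : ℂ,
      F1bar = C f * h ∧ F2 = C f * h ^ 2 ∧
      G4 = C (E + (3 / 2) * α * f) * h ^ 4 ∧
      G3 = C (K + L * f) * h ^ 3 + C ((3 / 2) * α) * h ^ 2 * X 0 ∧
      G2 = C A * h * X 0 + C (B + CC * f ^ 2 + D * f) * h ^ 2 ∧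
      ((3 / 4) * K - (3 / 4) * b * D) * f + (1 / 4) * e
        + (1 / 4) * (3 * b * CC - (1 / 2) * L) * f ^ 2 ≠ 0 ∧
      C (((3 / 4) * K - (3 / 4) * b * D) * f + (1 / 4) * e
          + (1 / 4) * (3 * b * CC - (1 / 2) * L) * f ^ 2) * h
        = X 2 - C (E - (3 / 4) * b * A + (3 / 4) * α * f) * X 0) := by
  obtain ⟨h0, h1, h2, hrep⟩ := lin_rep h hhhom
  obtain ⟨q0, q1, q2, qrep⟩ := lin_rep F1bar hF1bar
  have p32 : (C ((3:ℂ)/2) : MvPolynomial (Fin 3) ℂ) * 2 = 3 := by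
    rw [← map_ofNat (C : ℂ →+* MvPolynomial (Fin 3) ℂ) 2,
      ← map_ofNat (C : ℂ →+* MvPolynomial (Fin 3) ℂ) 3, ← map_mul]
    exact congrArg C (by norm_num)
  have pA : (C A : MvPolynomial (Fin 3) ℂ) * 4 = C β * 5 + C α * C b * 3 := by
    rw [← map_ofNat (C : ℂ →+* MvPolynomial (Fin 3) ℂ) 4,
      ← map_ofNat (C : ℂ →+* MvPolynomial (Fin 3) ℂ) 5,
      ← map_ofNat (C : ℂ →+* MvPolynomial (Fin 3) ℂ) 3,
      ← map_mul, ← map_mul, ← map_mul, ← map_mul, ← map_add]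
    exact congrArg C (by rw [hA]; ring)
  have pC : (C CC : MvPolynomial (Fin 3) ℂ) * 8 = C α * 3 := by
    rw [← map_ofNat (C : ℂ →+* MvPolynomial (Fin 3) ℂ) 8,
      ← map_ofNat (C : ℂ →+* MvPolynomial (Fin 3) ℂ) 3, ← map_mul, ← map_mul]
    exact congrArg C (by rw [hC]; ring)
  have pD : (C D : MvPolynomial (Fin 3) ℂ) * 4 + C b * C L * 3 = C E * 4 := by
    rw [← map_ofNat (C : ℂ →+* MvPolynomial (Fin 3) ℂ) 4,
      ← map_ofNat (C : ℂ →+* MvPolynomial (Fin 3) ℂ) 3,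
      ← map_mul, ← map_mul, ← map_mul, ← map_mul, ← map_add]
    exact congrArg C (by rw [hD, hE, hL]; ring)
  have pL : (C L : MvPolynomial (Fin 3) ℂ) * 4 = C β * 5 + C α * C b * 3 := by
    rw [← map_ofNat (C : ℂ →+* MvPolynomial (Fin 3) ℂ) 4,
      ← map_ofNat (C : ℂ →+* MvPolynomial (Fin 3) ℂ) 5,
      ← map_ofNat (C : ℂ →+* MvPolynomial (Fin 3) ℂ) 3,
      ← map_mul, ← map_mul, ← map_mul, ← map_mul, ← map_add]
    exact congrArg C (by rw [hL]; ring)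
  have master : ∀ i j : Fin 3,
      2 * jacMinor (X 0 + F2 + F3 + F4) (X 2 + G2 + G3 + G4 + G5 + G6) i j
      = 2 * (jacMinor (X 0) (X 2) i j + jacMinor (X 0) G2 i j + jacMinor F2 (X 2) i j
          + jacMinor (X 0) G3 i j + jacMinor F2 G2 i j + jacMinor F3 (X 2) i j)
        + h ^ 2 * ((C ((6:ℂ)*b*A - 8*E) * jacMinor h (X 0) i j
            + C ((6:ℂ)*(b*D - K)) * jacMinor h F1bar i j
            + C (8:ℂ) * jacMinor h (X 2) i j) * h
          + (C ((12:ℂ)*b*CC - 2*L) * jacMinor h F1bar i j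
            - C ((6:ℂ)*α) * jacMinor h (X 0) i j) * F1bar
          - C ((6:ℂ)*α) * jacMinor h F1bar i j * X 0) := by
    intro i j
    rw [hF2eq, hF3eq, hF4eq, hG2eq, hG3eq, hG4eq, hG5eq, hG6eq]
    simp only [jacMinor, map_add, map_sub, map_mul, map_ofNat, pderiv_mul, pderiv_pow, pderiv_C,
      zero_mul, mul_zero, zero_add, add_zero, Nat.cast_ofNat]
    linear_combination
      (C α * (-2*h^2*(X 0)*(pderiv i h * pderiv j F1bar - pderiv j h * pderiv i F1bar)
          - 2*h^2*F1bar*(pderiv i h * pderiv j (X 0) - pderiv j h * pderiv i (X 0))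
          - 2*h^3*F1bar*(pderiv i h * pderiv j F1bar - pderiv j h * pderiv i F1bar)
          + 3*C b*h^4*(pderiv i h * pderiv j (X 0) - pderiv j h * pderiv i (X 0))
          + 4*h^5*(pderiv i h * pderiv j (X 0) - pderiv j h * pderiv i (X 0))
          + 3*C b*h^5*(pderiv i h * pderiv j F1bar - pderiv j h * pderiv i F1bar)
          + 4*h^6*(pderiv i h * pderiv j F1bar - pderiv j h * pderiv i F1bar))
        + C α * C b * (-5*h^4*(pderiv i h * pderiv j (X 0) - pderiv j h * pderiv i (X 0))
          - 5*h^5*(pderiv i h * pderiv j F1bar - pderiv j h * pderiv i F1bar))) * p32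
      + (2*h^4*(pderiv i h * pderiv j (X 0) - pderiv j h * pderiv i (X 0))) * pA
      + (2*h^3*F1bar*(pderiv i h * pderiv j F1bar - pderiv j h * pderiv i F1bar)) * pC
      + (2*h^4*(pderiv i h * pderiv j F1bar - pderiv j h * pderiv i F1bar)) * pD
      + (2*h^5*(pderiv i h * pderiv j F1bar - pderiv j h * pderiv i F1bar)) * pL
  have keyLf : ∀ i j : Fin 3,
      ((C ((6:ℂ)*b*A - 8*E) * jacMinor h (X 0) i j
            + C ((6:ℂ)*(b*D - K)) * jacMinor h F1bar i j
            + C (8:ℂ) * jacMinor h (X 2) i j) * h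
          + (C ((12:ℂ)*b*CC - 2*L) * jacMinor h F1bar i j
            - C ((6:ℂ)*α) * jacMinor h (X 0) i j) * F1bar
          - C ((6:ℂ)*α) * jacMinor h F1bar i j * X 0) = 0 := by
    intro i j
    have hx1 : (X 0 : MvPolynomial (Fin 3) ℂ).IsHomogeneous 1 := isHomogeneous_X _ _
    have hz1 : (X 2 : MvPolynomial (Fin 3) ℂ).IsHomogeneous 1 := isHomogeneous_X _ _
    have j00 : ∀ (p q : MvPolynomial (Fin 3) ℂ), p.IsHomogeneous 1 → q.IsHomogeneous 1 →
        (jacMinor p q i j).IsHomogeneous 0 := fun p q hp hq => jac_homog (m := 0) (n := 0) hp hq i j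
    have hWhom : (((C ((6:ℂ)*b*A - 8*E) * jacMinor h (X 0) i j
              + C ((6:ℂ)*(b*D - K)) * jacMinor h F1bar i j
              + C (8:ℂ) * jacMinor h (X 2) i j) * h
            + (C ((12:ℂ)*b*CC - 2*L) * jacMinor h F1bar i j
              - C ((6:ℂ)*α) * jacMinor h (X 0) i j) * F1bar
            - C ((6:ℂ)*α) * jacMinor h F1bar i j * X 0)).IsHomogeneous 1 := by
      refine IsHomogeneous.sub (IsHomogeneous.add ?_ ?_) ?_
      · exact ((((j00 _ _ hhhom hx1).C_mul _).add ((j00 _ _ hhhom hF1bar).C_mul _)).add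
          ((j00 _ _ hhhom hz1).C_mul _)).mul hhhom
      · exact (((j00 _ _ hhhom hF1bar).C_mul _).sub ((j00 _ _ hhhom hx1).C_mul _)).mul hF1bar
      · exact (((j00 _ _ hhhom hF1bar).C_mul _).mul hx1)
    have t2C : ((2 : MvPolynomial (Fin 3) ℂ)).totalDegree = 0 := by
      rw [← map_ofNat (C : ℂ →+* MvPolynomial (Fin 3) ℂ) 2]; exact totalDegree_C _
    have hLowD : (2 * (jacMinor (X 0) (X 2) i j + jacMinor (X 0) G2 i j + jacMinor F2 (X 2) i j
            + jacMinor (X 0) G3 i j + jacMinor F2 G2 i j + jacMinor F3 (X 2) i j)).totalDegree ≤ 2 := by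
      refine le_trans (totalDegree_mul _ _) ?_
      rw [t2C, zero_add]
      have b1 : (jacMinor (X 0) (X 2) i j).totalDegree ≤ 2 :=
        le_trans ((jac_homog (m := 0) (n := 0) hx1 hz1 i j).totalDegree_le) (by norm_num)
      have b2 : (jacMinor (X 0) G2 i j).totalDegree ≤ 2 :=
        le_trans ((jac_homog (m := 0) (n := 1) hx1 hG2 i j).totalDegree_le) (by norm_num)
      have b3 : (jacMinor F2 (X 2) i j).totalDegree ≤ 2 :=
        le_trans ((jac_homog (m := 1) (n := 0) hF2 hz1 i j).totalDegree_le) (by norm_num)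
      have b4 : (jacMinor (X 0) G3 i j).totalDegree ≤ 2 :=
        le_trans ((jac_homog (m := 0) (n := 2) hx1 hG3 i j).totalDegree_le) (by norm_num)
      have b5 : (jacMinor F2 G2 i j).totalDegree ≤ 2 :=
        le_trans ((jac_homog (m := 1) (n := 1) hF2 hG2 i j).totalDegree_le) (by norm_num)
      have b6 : (jacMinor F3 (X 2) i j).totalDegree ≤ 2 :=
        le_trans ((jac_homog (m := 2) (n := 0) hF3 hz1 i j).totalDegree_le) (by norm_num)
      refine le_trans (totalDegree_add _ _) (max_le (le_trans (totalDegree_add _ _) ?_) b6)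
      refine max_le (le_trans (totalDegree_add _ _) ?_) b5
      refine max_le (le_trans (totalDegree_add _ _) ?_) b4
      refine max_le (le_trans (totalDegree_add _ _) ?_) b3
      exact max_le b1 b2
    have heq : h ^ 2 * (((C ((6:ℂ)*b*A - 8*E) * jacMinor h (X 0) i j
              + C ((6:ℂ)*(b*D - K)) * jacMinor h F1bar i j
              + C (8:ℂ) * jacMinor h (X 2) i j) * h
            + (C ((12:ℂ)*b*CC - 2*L) * jacMinor h F1bar i j
              - C ((6:ℂ)*α) * jacMinor h (X 0) i j) * F1bar
            - C ((6:ℂ)*α) * jacMinor h F1bar i j * X 0))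
        = 2 * jacMinor (X 0 + F2 + F3 + F4) (X 2 + G2 + G3 + G4 + G5 + G6) i j
          - 2 * (jacMinor (X 0) (X 2) i j + jacMinor (X 0) G2 i j + jacMinor F2 (X 2) i j
            + jacMinor (X 0) G3 i j + jacMinor F2 G2 i j + jacMinor F3 (X 2) i j) := by
      linear_combination (-1 : MvPolynomial (Fin 3) ℂ) * master i j
    have hdeg : (h ^ 2 * (((C ((6:ℂ)*b*A - 8*E) * jacMinor h (X 0) i j
              + C ((6:ℂ)*(b*D - K)) * jacMinor h F1bar i j
              + C (8:ℂ) * jacMinor h (X 2) i j) * h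
            + (C ((12:ℂ)*b*CC - 2*L) * jacMinor h F1bar i j
              - C ((6:ℂ)*α) * jacMinor h (X 0) i j) * F1bar
            - C ((6:ℂ)*α) * jacMinor h F1bar i j * X 0))).totalDegree < 3 := by
      rw [heq]
      refine lt_of_le_of_lt (totalDegree_sub _ _) (max_lt ?_ (lt_of_le_of_lt hLowD (by norm_num)))
      refine lt_of_le_of_lt (totalDegree_mul _ _) ?_
      rw [t2C, zero_add]
      exact hbr i j
    have hzero : h ^ 2 * (((C ((6:ℂ)*b*A - 8*E) * jacMinor h (X 0) i j
              + C ((6:ℂ)*(b*D - K)) * jacMinor h F1bar i j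
              + C (8:ℂ) * jacMinor h (X 2) i j) * h
            + (C ((12:ℂ)*b*CC - 2*L) * jacMinor h F1bar i j
              - C ((6:ℂ)*α) * jacMinor h (X 0) i j) * F1bar
            - C ((6:ℂ)*α) * jacMinor h F1bar i j * X 0)) = 0 := by
      by_contra hne
      have h3 : (h ^ 2 * _).IsHomogeneous 3 := (hhhom.pow 2).mul hWhom
      have := h3.totalDegree hne
      omega
    rcases mul_eq_zero.mp hzero with h1 | h2
    · exact absurd (pow_eq_zero_iff (by norm_num)|>.mp h1) hh
    · exact h2
  have hne : h0 ≠ 0 ∨ h1 ≠ 0 ∨ h2 ≠ 0 := by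
    by_contra hcon
    push_neg at hcon
    obtain ⟨a1v, a2v, a3v⟩ := hcon
    exact hh (by rw [hrep, a1v, a2v, a3v]; simp)
  -- the nine scalar equations
  have e010 : ((6*b*A-8*E)*(-h1) + 6*(b*D-K)*(h0*q1-h1*q0))*h0
      + ((12*b*CC-2*L)*(h0*q1-h1*q0) + 6*α*h1)*q0 - 6*α*(h0*q1-h1*q0)*1 = 0 := by
    have Ev := congrArg (eval (fun k : Fin 3 => if k = 0 then (1:ℂ) else 0)) (keyLf 0 1)
    rw [hrep, qrep] at Ev
    simp [jacMinor, map_add, map_mul, map_sub, pderiv_C_mul, pderiv_X, Pi.single_apply,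
      eval_C, eval_X, map_ofNat] at Ev
    linear_combination Ev
  have e011 : ((6*b*A-8*E)*(-h1) + 6*(b*D-K)*(h0*q1-h1*q0))*h1
      + ((12*b*CC-2*L)*(h0*q1-h1*q0) + 6*α*h1)*q1 - 6*α*(h0*q1-h1*q0)*0 = 0 := by
    have Ev := congrArg (eval (fun k : Fin 3 => if k = 1 then (1:ℂ) else 0)) (keyLf 0 1)
    rw [hrep, qrep] at Ev
    simp [jacMinor, map_add, map_mul, map_sub, pderiv_C_mul, pderiv_X, Pi.single_apply,
      eval_C, eval_X, map_ofNat] at Ev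
    linear_combination Ev
  have e012 : ((6*b*A-8*E)*(-h1) + 6*(b*D-K)*(h0*q1-h1*q0))*h2
      + ((12*b*CC-2*L)*(h0*q1-h1*q0) + 6*α*h1)*q2 - 6*α*(h0*q1-h1*q0)*0 = 0 := by
    have Ev := congrArg (eval (fun k : Fin 3 => if k = 2 then (1:ℂ) else 0)) (keyLf 0 1)
    rw [hrep, qrep] at Ev
    simp [jacMinor, map_add, map_mul, map_sub, pderiv_C_mul, pderiv_X, Pi.single_apply,
      eval_C, eval_X, map_ofNat] at Ev
    linear_combination Ev
  have e020 : ((6*b*A-8*E)*(-h2) + 6*(b*D-K)*(h0*q2-h2*q0) + 8*h0)*h0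
      + ((12*b*CC-2*L)*(h0*q2-h2*q0) + 6*α*h2)*q0 - 6*α*(h0*q2-h2*q0)*1 = 0 := by
    have Ev := congrArg (eval (fun k : Fin 3 => if k = 0 then (1:ℂ) else 0)) (keyLf 0 2)
    rw [hrep, qrep] at Ev
    simp [jacMinor, map_add, map_mul, map_sub, pderiv_C_mul, pderiv_X, Pi.single_apply,
      eval_C, eval_X, map_ofNat] at Ev
    linear_combination Ev
  have e021 : ((6*b*A-8*E)*(-h2) + 6*(b*D-K)*(h0*q2-h2*q0) + 8*h0)*h1
      + ((12*b*CC-2*L)*(h0*q2-h2*q0) + 6*α*h2)*q1 - 6*α*(h0*q2-h2*q0)*0 = 0 := by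
    have Ev := congrArg (eval (fun k : Fin 3 => if k = 1 then (1:ℂ) else 0)) (keyLf 0 2)
    rw [hrep, qrep] at Ev
    simp [jacMinor, map_add, map_mul, map_sub, pderiv_C_mul, pderiv_X, Pi.single_apply,
      eval_C, eval_X, map_ofNat] at Ev
    linear_combination Ev
  have e022 : ((6*b*A-8*E)*(-h2) + 6*(b*D-K)*(h0*q2-h2*q0) + 8*h0)*h2
      + ((12*b*CC-2*L)*(h0*q2-h2*q0) + 6*α*h2)*q2 - 6*α*(h0*q2-h2*q0)*0 = 0 := by
    have Ev := congrArg (eval (fun k : Fin 3 => if k = 2 then (1:ℂ) else 0)) (keyLf 0 2)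
    rw [hrep, qrep] at Ev
    simp [jacMinor, map_add, map_mul, map_sub, pderiv_C_mul, pderiv_X, Pi.single_apply,
      eval_C, eval_X, map_ofNat] at Ev
    linear_combination Ev
  have e120 : (6*(b*D-K)*(h1*q2-h2*q1) + 8*h1)*h0
      + ((12*b*CC-2*L)*(h1*q2-h2*q1))*q0 - 6*α*(h1*q2-h2*q1)*1 = 0 := by
    have Ev := congrArg (eval (fun k : Fin 3 => if k = 0 then (1:ℂ) else 0)) (keyLf 1 2)
    rw [hrep, qrep] at Ev
    simp [jacMinor, map_add, map_mul, map_sub, pderiv_C_mul, pderiv_X, Pi.single_apply,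
      eval_C, eval_X, map_ofNat] at Ev
    linear_combination Ev
  have e121 : (6*(b*D-K)*(h1*q2-h2*q1) + 8*h1)*h1
      + ((12*b*CC-2*L)*(h1*q2-h2*q1))*q1 - 6*α*(h1*q2-h2*q1)*0 = 0 := by
    have Ev := congrArg (eval (fun k : Fin 3 => if k = 1 then (1:ℂ) else 0)) (keyLf 1 2)
    rw [hrep, qrep] at Ev
    simp [jacMinor, map_add, map_mul, map_sub, pderiv_C_mul, pderiv_X, Pi.single_apply,
      eval_C, eval_X, map_ofNat] at Ev
    linear_combination Ev
  have e122 : (6*(b*D-K)*(h1*q2-h2*q1) + 8*h1)*h2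
      + ((12*b*CC-2*L)*(h1*q2-h2*q1))*q2 - 6*α*(h1*q2-h2*q1)*0 = 0 := by
    have Ev := congrArg (eval (fun k : Fin 3 => if k = 2 then (1:ℂ) else 0)) (keyLf 1 2)
    rw [hrep, qrep] at Ev
    simp [jacMinor, map_add, map_mul, map_sub, pderiv_C_mul, pderiv_X, Pi.single_apply,
      eval_C, eval_X, map_ofNat] at Ev
    linear_combination Ev
  by_cases hm : h0*q1 - h1*q0 = 0 ∧ h0*q2 - h2*q0 = 0 ∧ h1*q2 - h2*q1 = 0
  · -- second alternative
    right
    obtain ⟨mm01, mm02, mm12⟩ := hm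
    obtain ⟨f, hq0, hq1, hq2⟩ := prop3 h0 h1 h2 q0 q1 q2 hne mm01 mm02 mm12
    have hqf : F1bar = C f * h := by
      rw [qrep, hrep]
      have c0 : (C q0 : MvPolynomial (Fin 3) ℂ) = C f * C h0 := by
        rw [← map_mul]; exact congrArg C hq0
      have c1 : (C q1 : MvPolynomial (Fin 3) ℂ) = C f * C h1 := by
        rw [← map_mul]; exact congrArg C hq1
      have c2 : (C q2 : MvPolynomial (Fin 3) ℂ) = C f * C h2 := by
        rw [← map_mul]; exact congrArg C hq2
      linear_combination X 0 * c0 + X 1 * c1 + X 2 * c2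
    have key2a : h1 = 0 := by
      rcases hne with H | H | H
      · have w1 : (8*h1)*h0 = 0 := by
          linear_combination e120 - (6*(b*D-K)*h0 + (12*b*CC-2*L)*q0 - 6*α)*mm12
        have := (mul_eq_zero.mp w1).resolve_right H
        linear_combination this/8
      · have w1 : (8*h1)*h1 = 0 := by
          linear_combination e121 - (6*(b*D-K)*h1 + (12*b*CC-2*L)*q1)*mm12
        have := (mul_eq_zero.mp w1).resolve_right H
        linear_combination this/8
      · have w1 : (8*h1)*h2 = 0 := by
          linear_combination e122 - (6*(b*D-K)*h2 + (12*b*CC-2*L)*q2)*mm12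
        have := (mul_eq_zero.mp w1).resolve_right H
        linear_combination this/8
    have key2b : 8*h0 = (6*b*A - 8*E - 6*α*f)*h2 := by
      rcases hne with H | H | H
      · have w2 : (8*h0 - (6*b*A-8*E-6*α*f)*h2)*h0 = 0 := by
          linear_combination e020 - (6*(b*D-K)*h0 + (12*b*CC-2*L)*q0 - 6*α)*mm02 - 6*α*h2*hq0
        have := (mul_eq_zero.mp w2).resolve_right H
        linear_combination this
      · have w2 : (8*h0 - (6*b*A-8*E-6*α*f)*h2)*h1 = 0 := by
          linear_combination e021 - (6*(b*D-K)*h1 + (12*b*CC-2*L)*q1)*mm02 - 6*α*h2*hq1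
        have := (mul_eq_zero.mp w2).resolve_right H
        linear_combination this
      · have w2 : (8*h0 - (6*b*A-8*E-6*α*f)*h2)*h2 = 0 := by
          linear_combination e022 - (6*(b*D-K)*h2 + (12*b*CC-2*L)*q2)*mm02 - 6*α*h2*hq2
        have := (mul_eq_zero.mp w2).resolve_right H
        linear_combination this
    have hh2 : h2 ≠ 0 := by
      intro h2z
      rcases hne with H | H | H
      · apply H
        linear_combination key2b/8 + ((6*b*A - 8*E - 6*α*f)/8)*h2z
      · exact H key2a
      · exact H h2z
    refine ⟨f, 4/h2 - (3*K - 3*b*D)*f - (3*b*CC - 1/2*L)*f^2, hqf, ?_, ?_, ?_, ?_, ?_, ?_⟩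
    · rw [hF2eq, hqf]; ring
    · rw [hG4eq, hqf, show (C (E + 3 / 2 * α * f) : MvPolynomial (Fin 3) ℂ)
        = C E + C (3/2*α) * C f from by rw [map_add, map_mul]]
      ring
    · rw [hG3eq, hqf, show (C (K + L * f) : MvPolynomial (Fin 3) ℂ)
        = C K + C L * C f from by rw [map_add, map_mul]]
      ring
    · rw [hG2eq, hqf, show (C (B + CC * f ^ 2 + D * f) : MvPolynomial (Fin 3) ℂ)
        = C B + C CC * C f ^ 2 + C D * C f from by rw [map_add, map_add, map_mul, map_mul, map_pow]]
      ring
    · have hMv : ((3 / 4) * K - (3 / 4) * b * D) * f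
          + (1 / 4) * (4/h2 - (3*K - 3*b*D)*f - (3*b*CC - 1/2*L)*f^2)
          + (1 / 4) * (3 * b * CC - (1 / 2) * L) * f ^ 2 = 1/h2 := by ring
      rw [hMv]
      exact one_div_ne_zero hh2
    · have hMv : ((3 / 4) * K - (3 / 4) * b * D) * f
          + (1 / 4) * (4/h2 - (3*K - 3*b*D)*f - (3*b*CC - 1/2*L)*f^2)
          + (1 / 4) * (3 * b * CC - (1 / 2) * L) * f ^ 2 = 1/h2 := by ring
      rw [hMv, hrep]
      have c0 : (C (1/h2) : MvPolynomial (Fin 3) ℂ) * C h0 = -C (E - 3/4*b*A + 3/4*α*f) := by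
        rw [← map_mul, ← map_neg]
        refine congrArg C ?_
        field_simp
        linear_combination key2b/2
      have c1 : (C (1/h2) : MvPolynomial (Fin 3) ℂ) * C h1 = 0 := by
        rw [key2a, map_zero, mul_zero]
      have c2 : (C (1/h2) : MvPolynomial (Fin 3) ℂ) * C h2 = 1 := by
        rw [← map_mul, show (1/h2)*h2 = 1 from by field_simp, map_one]
      linear_combination X 0 * c0 + X 1 * c1 + X 2 * c2
  · -- first alternative
    left
    have hsplit : h0*q1 - h1*q0 ≠ 0 ∨ h0*q2 - h2*q0 ≠ 0 ∨ h1*q2 - h2*q1 ≠ 0 := by tauto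
    have hRS : ∃ R S : ℂ, 1 = R*q0 + S*h0 ∧ 0 = R*q1 + S*h1 ∧ 0 = R*q2 + S*h2 := by
      rcases hsplit with H | H | H
      · have hd : 6*α*(h0*q1-h1*q0) ≠ 0 := mul_ne_zero (mul_ne_zero (by norm_num) hα) H
        refine ⟨((12*b*CC-2*L)*(h0*q1-h1*q0) + 6*α*h1)/(6*α*(h0*q1-h1*q0)),
          ((6*b*A-8*E)*(-h1) + 6*(b*D-K)*(h0*q1-h1*q0))/(6*α*(h0*q1-h1*q0)), ?_, ?_, ?_⟩
        · field_simp
          linear_combination -e010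
        · field_simp
          linear_combination -e011
        · field_simp
          linear_combination -e012
      · have hd : 6*α*(h0*q2-h2*q0) ≠ 0 := mul_ne_zero (mul_ne_zero (by norm_num) hα) H
        refine ⟨((12*b*CC-2*L)*(h0*q2-h2*q0) + 6*α*h2)/(6*α*(h0*q2-h2*q0)),
          ((6*b*A-8*E)*(-h2) + 6*(b*D-K)*(h0*q2-h2*q0) + 8*h0)/(6*α*(h0*q2-h2*q0)), ?_, ?_, ?_⟩
        · field_simp
          linear_combination -e020
        · field_simp
          linear_combination -e021
        · field_simp
          linear_combination -e022
      · have hd : 6*α*(h1*q2-h2*q1) ≠ 0 := mul_ne_zero (mul_ne_zero (by norm_num) hα) H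
        refine ⟨((12*b*CC-2*L)*(h1*q2-h2*q1))/(6*α*(h1*q2-h2*q1)),
          (6*(b*D-K)*(h1*q2-h2*q1) + 8*h1)/(6*α*(h1*q2-h2*q1)), ?_, ?_, ?_⟩
        · field_simp
          linear_combination -e120
        · field_simp
          linear_combination -e121
        · field_simp
          linear_combination -e122
    obtain ⟨R, S, hx0, hx1, hx2⟩ := hRS
    have hN01 : -h1 = R*(h0*q1-h1*q0) := by linear_combination (-h1)*hx0 + h0*hx1
    have hN02 : -h2 = R*(h0*q2-h2*q0) := by linear_combination (-h2)*hx0 + h0*hx2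
    have hN12 : (0:ℂ) = R*(h1*q2-h2*q1) := by linear_combination (-h2)*hx1 + h1*hx2
    have f010 : (((6*b*A-8*E)*R + 6*(b*D-K) - 6*α*S)*(h0*q1-h1*q0))*h0
        + (((12*b*CC-2*L) - 12*α*R)*(h0*q1-h1*q0))*q0 = 0 := by
      linear_combination e010 - ((6*b*A-8*E)*h0 - 6*α*q0)*hN01 + 6*α*(h0*q1-h1*q0)*hx0
    have f011 : (((6*b*A-8*E)*R + 6*(b*D-K) - 6*α*S)*(h0*q1-h1*q0))*h1
        + (((12*b*CC-2*L) - 12*α*R)*(h0*q1-h1*q0))*q1 = 0 := by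
      linear_combination e011 - ((6*b*A-8*E)*h1 - 6*α*q1)*hN01 + 6*α*(h0*q1-h1*q0)*hx1
    have f012 : (((6*b*A-8*E)*R + 6*(b*D-K) - 6*α*S)*(h0*q1-h1*q0))*h2
        + (((12*b*CC-2*L) - 12*α*R)*(h0*q1-h1*q0))*q2 = 0 := by
      linear_combination e012 - ((6*b*A-8*E)*h2 - 6*α*q2)*hN01 + 6*α*(h0*q1-h1*q0)*hx2
    have f020 : (8*h0 + ((6*b*A-8*E)*R + 6*(b*D-K) - 6*α*S)*(h0*q2-h2*q0))*h0
        + (((12*b*CC-2*L) - 12*α*R)*(h0*q2-h2*q0))*q0 = 0 := by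
      linear_combination e020 - ((6*b*A-8*E)*h0 - 6*α*q0)*hN02 + 6*α*(h0*q2-h2*q0)*hx0
    have f021 : (8*h0 + ((6*b*A-8*E)*R + 6*(b*D-K) - 6*α*S)*(h0*q2-h2*q0))*h1
        + (((12*b*CC-2*L) - 12*α*R)*(h0*q2-h2*q0))*q1 = 0 := by
      linear_combination e021 - ((6*b*A-8*E)*h1 - 6*α*q1)*hN02 + 6*α*(h0*q2-h2*q0)*hx1
    have f022 : (8*h0 + ((6*b*A-8*E)*R + 6*(b*D-K) - 6*α*S)*(h0*q2-h2*q0))*h2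
        + (((12*b*CC-2*L) - 12*α*R)*(h0*q2-h2*q0))*q2 = 0 := by
      linear_combination e022 - ((6*b*A-8*E)*h2 - 6*α*q2)*hN02 + 6*α*(h0*q2-h2*q0)*hx2
    have f120 : (8*h1 + ((6*b*A-8*E)*R + 6*(b*D-K) - 6*α*S)*(h1*q2-h2*q1))*h0
        + (((12*b*CC-2*L) - 12*α*R)*(h1*q2-h2*q1))*q0 = 0 := by
      linear_combination e120 - ((6*b*A-8*E)*h0 - 6*α*q0)*hN12 + 6*α*(h1*q2-h2*q1)*hx0
    have f121 : (8*h1 + ((6*b*A-8*E)*R + 6*(b*D-K) - 6*α*S)*(h1*q2-h2*q1))*h1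
        + (((12*b*CC-2*L) - 12*α*R)*(h1*q2-h2*q1))*q1 = 0 := by
      linear_combination e121 - ((6*b*A-8*E)*h1 - 6*α*q1)*hN12 + 6*α*(h1*q2-h2*q1)*hx1
    have f122 : (8*h1 + ((6*b*A-8*E)*R + 6*(b*D-K) - 6*α*S)*(h1*q2-h2*q1))*h2
        + (((12*b*CC-2*L) - 12*α*R)*(h1*q2-h2*q1))*q2 = 0 := by
      linear_combination e122 - ((6*b*A-8*E)*h2 - 6*α*q2)*hN12 + 6*α*(h1*q2-h2*q1)*hx2
    have u01 := dep0 _ _ h0 h1 h2 q0 q1 q2 f010 f011 f012 hm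
    have u02 := dep0 _ _ h0 h1 h2 q0 q1 q2 f020 f021 f022 hm
    have u12 := dep0 _ _ h0 h1 h2 q0 q1 q2 f120 f121 f122 hm
    have pv01 : h0*((((6*b*A-8*E)*R + 6*(b*D-K) - 6*α*S))*q1)
        - h1*((((6*b*A-8*E)*R + 6*(b*D-K) - 6*α*S))*q0) = 0 := by linear_combination u01
    have pv02 : h0*(8 + (((6*b*A-8*E)*R + 6*(b*D-K) - 6*α*S))*q2)
        - h2*((((6*b*A-8*E)*R + 6*(b*D-K) - 6*α*S))*q0) = 0 := by linear_combination u02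
    have pv12 : h1*(8 + (((6*b*A-8*E)*R + 6*(b*D-K) - 6*α*S))*q2)
        - h2*((((6*b*A-8*E)*R + 6*(b*D-K) - 6*α*S))*q1) = 0 := by linear_combination u12
    obtain ⟨s, hs0, hs1, hs2⟩ := prop3 h0 h1 h2
      ((((6*b*A-8*E)*R + 6*(b*D-K) - 6*α*S))*q0)
      ((((6*b*A-8*E)*R + 6*(b*D-K) - 6*α*S))*q1)
      (8 + (((6*b*A-8*E)*R + 6*(b*D-K) - 6*α*S))*q2) hne pv01 pv02 pv12
    have hxrep : (X 0 : MvPolynomial (Fin 3) ℂ) = C R * F1bar + C S * h := by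
      rw [qrep, hrep]
      have cc0 : (C R : MvPolynomial (Fin 3) ℂ) * C q0 + C S * C h0 = 1 := by
        rw [← map_mul, ← map_mul, ← map_add, ← hx0, map_one]
      have cc1 : (C R : MvPolynomial (Fin 3) ℂ) * C q1 + C S * C h1 = 0 := by
        rw [← map_mul, ← map_mul, ← map_add, ← hx1, map_zero]
      have cc2 : (C R : MvPolynomial (Fin 3) ℂ) * C q2 + C S * C h2 = 0 := by
        rw [← map_mul, ← map_mul, ← map_add, ← hx2, map_zero]
      linear_combination -(X 0 * cc0) - X 1 * cc1 - X 2 * cc2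
    have hzrep : (X 2 : MvPolynomial (Fin 3) ℂ)
        = C (-(((6*b*A-8*E)*R + 6*(b*D-K) - 6*α*S))/8) * F1bar + C (s/8) * h := by
      rw [qrep, hrep]
      have z0 : (-(((6*b*A-8*E)*R + 6*(b*D-K) - 6*α*S))/8)*q0 + (s/8)*h0 = 0 := by
        linear_combination (-1/8)*hs0
      have z1 : (-(((6*b*A-8*E)*R + 6*(b*D-K) - 6*α*S))/8)*q1 + (s/8)*h1 = 0 := by
        linear_combination (-1/8)*hs1
      have z2 : (-(((6*b*A-8*E)*R + 6*(b*D-K) - 6*α*S))/8)*q2 + (s/8)*h2 = 1 := by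
        linear_combination (-1/8)*hs2
      have cc0 : (C (-(((6*b*A-8*E)*R + 6*(b*D-K) - 6*α*S))/8) : MvPolynomial (Fin 3) ℂ) * C q0
          + C (s/8) * C h0 = 0 := by
        rw [← map_mul, ← map_mul, ← map_add, z0, map_zero]
      have cc1 : (C (-(((6*b*A-8*E)*R + 6*(b*D-K) - 6*α*S))/8) : MvPolynomial (Fin 3) ℂ) * C q1
          + C (s/8) * C h1 = 0 := by
        rw [← map_mul, ← map_mul, ← map_add, z1, map_zero]
      have cc2 : (C (-(((6*b*A-8*E)*R + 6*(b*D-K) - 6*α*S))/8) : MvPolynomial (Fin 3) ℂ) * C q2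
          + C (s/8) * C h2 = 1 := by
        rw [← map_mul, ← map_mul, ← map_add, z2, map_one]
      linear_combination -(X 0 * cc0) - X 1 * cc1 - X 2 * cc2
    refine ⟨R, S, -(((6*b*A-8*E)*R + 6*(b*D-K) - 6*α*S))/8, s/8,
      K + 3/2*α*S, L + 3/2*α*R, B + A*S, D + A*R, hxrep, hzrep, ?_, ?_⟩
    · rw [hG3eq, hxrep, show (C (K + 3/2*α*S) : MvPolynomial (Fin 3) ℂ)
        = C K + C (3/2*α) * C S from by rw [map_add, map_mul],
        show (C (L + 3/2*α*R) : MvPolynomial (Fin 3) ℂ)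
        = C L + C (3/2*α) * C R from by rw [map_add, map_mul]]
      ring
    · rw [hG2eq, hxrep, show (C (B + A*S) : MvPolynomial (Fin 3) ℂ)
        = C B + C A * C S from by rw [map_add, map_mul],
        show (C (D + A*R) : MvPolynomial (Fin 3) ℂ)
        = C D + C A * C R from by rw [map_add, map_mul]]
      ring
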